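/- Let $(M,\mu)$ be a measure space, $\mathcal{S}\subset M$ of finite measure, and let $d_1, d_2$ be two topologically equivalent metrics on a space $X$ (they induce the same topology). If a family of measurable partial maps $\{(\phi_t,B_t)\}_{t\in(0,1)}$ into $X$ converges to $(\phi_0, B_0)$ with respect to $\mathcal{D}^{d_1}_\mathcal{S}$ as $t\to 0$, then it converges to $(\phi_0, B_0)$ with respect to $\mathcal{D}^{d_2}_\mathcal{S}$ as $t\to 0$. -/

import Mathlib

open MeasureTheory Set Filter

/-- The penalty-function distance built from an abstract distance function `d` on `X`,
restricted to `𝒮`. -/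
noncomputable def DresGen {M X : Type*} [MeasurableSpace M] (μ : Measure M)
    (d : X → X → ℝ) (S Bφ Bψ : Set M) (φ ψ : M → X) : ℝ :=
  (∫ x in Bφ ∩ Bψ ∩ S, min 1 (d (φ x) (ψ x)) ∂μ) +
    (μ (((Bφ \ Bψ) ∪ (Bψ \ Bφ)) ∩ S)).toReal

/-- If `d₁` and `d₂` are topologically equivalent metrics on `X`, then convergence of a
family of partial maps with respect to `𝒟^{d₁}_𝒮` implies convergence with respect to
`𝒟^{d₂}_𝒮`. -/
theorem converges_of_equiv_metric {M X : Type*} [MeasurableSpace M] (μ : Measure M)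
    {S : Set M} (hS : MeasurableSet S) (hSfin : μ S < ⊤)
    (d1 d2 : X → X → ℝ)
    (h1nonneg : ∀ x y, 0 ≤ d1 x y) (h1self : ∀ x, d1 x x = 0)
    (h1symm : ∀ x y, d1 x y = d1 y x) (h1tri : ∀ x y z, d1 x z ≤ d1 x y + d1 y z)
    (h1pos : ∀ x y, d1 x y = 0 → x = y)
    (h2nonneg : ∀ x y, 0 ≤ d2 x y) (h2self : ∀ x, d2 x x = 0)
    (h2symm : ∀ x y, d2 x y = d2 y x) (h2tri : ∀ x y z, d2 x z ≤ d2 x y + d2 y z)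
    (h2pos : ∀ x y, d2 x y = 0 → x = y)
    (hequiv12 : ∀ y : X, ∀ ε > (0 : ℝ), ∃ δ > (0 : ℝ), ∀ z, d1 y z < δ → d2 y z < ε)
    (hequiv21 : ∀ y : X, ∀ ε > (0 : ℝ), ∃ δ > (0 : ℝ), ∀ z, d2 y z < δ → d1 y z < ε)
    (B : ℝ → Set M) (φ : ℝ → M → X)
    (hB : ∀ t ∈ Set.Ioo (0 : ℝ) 1, MeasurableSet (B t))
    (B0 : Set M) (φ0 : M → X) (hB0 : MeasurableSet B0)
    (hm1 : ∀ t ∈ Set.Ioo (0 : ℝ) 1, Measurable fun x => d1 (φ t x) (φ0 x))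
    (hm2 : ∀ t ∈ Set.Ioo (0 : ℝ) 1, Measurable fun x => d2 (φ t x) (φ0 x))
    (hconv : Tendsto (fun t => DresGen μ d1 S (B t) B0 (φ t) φ0)
      (nhdsWithin 0 (Set.Ioo 0 1)) (nhds 0)) :
    Tendsto (fun t => DresGen μ d2 S (B t) B0 (φ t) φ0)
      (nhdsWithin 0 (Set.Ioo 0 1)) (nhds 0) := by
  classical
  set L := nhdsWithin (0:ℝ) (Set.Ioo 0 1) with hLdef
  set E : ℝ → Set M := fun t => B t ∩ B0 ∩ S with hEdef
  set I1 : ℝ → ℝ := fun t => ∫ x in E t, min 1 (d1 (φ t x) (φ0 x)) ∂μ with hI1def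
  set I2 : ℝ → ℝ := fun t => ∫ x in E t, min 1 (d2 (φ t x) (φ0 x)) ∂μ with hI2def
  set J : ℝ → ℝ := fun t => (μ (((B t \ B0) ∪ (B0 \ B t)) ∩ S)).toReal with hJdef
  have hD1 : ∀ t, DresGen μ d1 S (B t) B0 (φ t) φ0 = I1 t + J t := fun t => rfl
  have hD2 : ∀ t, DresGen μ d2 S (B t) B0 (φ t) φ0 = I2 t + J t := fun t => rfl
  have hEmeas : ∀ t ∈ Set.Ioo (0:ℝ) 1, MeasurableSet (E t) :=
    fun t ht => ((hB t ht).inter hB0).inter hS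
  have hESub : ∀ t, E t ⊆ S := fun t => inter_subset_right
  have hJnonneg : ∀ t, 0 ≤ J t := fun t => ENNReal.toReal_nonneg
  have hI1nonneg : ∀ t ∈ Set.Ioo (0:ℝ) 1, 0 ≤ I1 t := fun t ht =>
    setIntegral_nonneg (hEmeas t ht) fun x _ => le_min zero_le_one (h1nonneg _ _)
  have hI2nonneg : ∀ t ∈ Set.Ioo (0:ℝ) 1, 0 ≤ I2 t := fun t ht =>
    setIntegral_nonneg (hEmeas t ht) fun x _ => le_min zero_le_one (h2nonneg _ _)
  have hmemL : ∀ᶠ t in L, t ∈ Set.Ioo (0:ℝ) 1 := self_mem_nhdsWithin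
  have hI1tendsto : Tendsto I1 L (nhds 0) := by
    refine tendsto_of_tendsto_of_tendsto_of_le_of_le' tendsto_const_nhds hconv
      (hmemL.mono fun t ht => hI1nonneg t ht) ?_
    exact hmemL.mono fun t ht => by
      rw [hD1 t]; exact le_add_of_nonneg_right (hJnonneg t)
  have hJtendsto : Tendsto J L (nhds 0) := by
    refine tendsto_of_tendsto_of_tendsto_of_le_of_le' tendsto_const_nhds hconv
      (Eventually.of_forall hJnonneg) ?_
    exact hmemL.mono fun t ht => by
      rw [hD1 t]; exact le_add_of_nonneg_left (hI1nonneg t ht)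
  have hI2tendsto : Tendsto I2 L (nhds 0) := by
    apply tendsto_of_subseq_tendsto
    intro u hu
    have humem : ∀ᶠ n in atTop, u n ∈ Set.Ioo (0:ℝ) 1 := hu.eventually_mem self_mem_nhdsWithin
    have hev : ∀ j : ℕ, ∃ n : ℕ, I1 (u n) < (1/2:ℝ)^j ∧ J (u n) < (1/2:ℝ)^j ∧
        u n ∈ Set.Ioo (0:ℝ) 1 := by
      intro j
      have h1 : ∀ᶠ n in atTop, I1 (u n) < (1/2:ℝ)^j :=
        (hI1tendsto.comp hu).eventually (gt_mem_nhds (by positivity))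
      have h2 : ∀ᶠ n in atTop, J (u n) < (1/2:ℝ)^j :=
        (hJtendsto.comp hu).eventually (gt_mem_nhds (by positivity))
      exact (h1.and (h2.and humem)).exists
    choose ms hms1 hms2 hms3 using hev
    set s : ℕ → ℝ := fun j => u (ms j) with hsdef
    refine ⟨ms, ?_⟩
    have hEm : ∀ j, MeasurableSet (E (s j)) := fun j => hEmeas _ (hms3 j)
    -- the ENNReal-valued d1 control functions
    set G : ℕ → M → ENNReal := fun j =>
      (E (s j)).indicator fun x => ENNReal.ofReal (min 1 (d1 (φ (s j) x) (φ0 x))) with hGdef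
    have hGmeas : ∀ j, Measurable (G j) := fun j =>
      ((measurable_const.min (hm1 _ (hms3 j))).ennreal_ofReal).indicator (hEm j)
    have hfin : ∀ j, IsFiniteMeasure (μ.restrict (E (s j))) := fun j => by
      constructor
      rw [Measure.restrict_apply_univ]
      exact lt_of_le_of_lt (measure_mono (hESub _)) hSfin
    have hint : ∀ j, Integrable (fun x => min 1 (d1 (φ (s j) x) (φ0 x)))
        (μ.restrict (E (s j))) := by
      intro j
      haveI := hfin j
      refine (integrable_const (1:ℝ)).mono'
        ((measurable_const.min (hm1 _ (hms3 j))).aestronglyMeasurable) ?_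
      filter_upwards with x
      rw [Real.norm_eq_abs, abs_of_nonneg (le_min zero_le_one (h1nonneg _ _))]
      exact min_le_left _ _
    have hGint : ∀ j, ∫⁻ x, G j x ∂μ = ENNReal.ofReal (I1 (s j)) := by
      intro j
      simp only [hGdef]
      rw [lintegral_indicator (hEm j) _]
      rw [← ofReal_integral_eq_lintegral_ofReal (hint j)
        (Eventually.of_forall fun x => le_min zero_le_one (h1nonneg _ _))]
    have hGle : ∀ j, ∫⁻ x, G j x ∂μ ≤ ENNReal.ofReal ((1/2:ℝ)^j) := fun j => by
      rw [hGint j]; exact ENNReal.ofReal_le_ofReal (hms1 j).le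
    have hsum : (∑' j, ∫⁻ x, G j x ∂μ) ≠ ⊤ := by
      refine ne_top_of_le_ne_top ?_ (ENNReal.tsum_le_tsum hGle)
      have : ∀ j : ℕ, ENNReal.ofReal ((1/2:ℝ)^j) = (2⁻¹ : ENNReal)^j := by
        intro j
        rw [ENNReal.ofReal_pow (by norm_num)]
        congr 1
        rw [one_div, ENNReal.ofReal_inv_of_pos two_pos, ENNReal.ofReal_ofNat]
      simp only [this]
      rw [ENNReal.tsum_geometric]
      simp
    have hae : ∀ᵐ x ∂μ, (∑' j, G j x) ≠ ⊤ := by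
      have hmt : Measurable fun x => ∑' j, G j x := Measurable.ennreal_tsum hGmeas
      have hlt : ∫⁻ x, ∑' j, G j x ∂μ < ⊤ := by
        rw [lintegral_tsum fun j => (hGmeas j).aemeasurable]
        exact lt_top_iff_ne_top.2 hsum
      filter_upwards [ae_lt_top hmt hlt.ne] with x hx
      exact hx.ne
    have haeconv : ∀ᵐ x ∂μ, Tendsto (fun j => G j x) atTop (nhds 0) :=
      hae.mono fun x hx => ENNReal.tendsto_atTop_zero_of_tsum_ne_top hx
    -- the real-valued d2 functions
    set H : ℕ → M → ℝ := fun j =>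
      (E (s j)).indicator fun x => min 1 (d2 (φ (s j) x) (φ0 x)) with hHdef
    have hHconv : ∀ᵐ x ∂μ, Tendsto (fun j => H j x) atTop (nhds 0) := by
      filter_upwards [haeconv] with x hx
      rw [Metric.tendsto_atTop]
      intro ε hε
      obtain ⟨δ, hδpos, hδ⟩ := hequiv12 (φ0 x) ε hε
      have hδ'pos : (0:ℝ) < min δ 1 := lt_min hδpos one_pos
      have hev : ∀ᶠ j in atTop, G j x < ENNReal.ofReal (min δ 1) :=
        hx.eventually (gt_mem_nhds (ENNReal.ofReal_pos.2 hδ'pos))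
      obtain ⟨N, hN⟩ := eventually_atTop.1 hev
      refine ⟨N, fun n hn => ?_⟩
      rw [Real.dist_eq, sub_zero]
      by_cases hxE : x ∈ E (s n)
      · have hGn : ENNReal.ofReal (min 1 (d1 (φ (s n) x) (φ0 x))) < ENNReal.ofReal (min δ 1) := by
          have := hN n hn
          simpa only [hGdef, indicator_of_mem hxE] using this
        have h1 : min 1 (d1 (φ (s n) x) (φ0 x)) < min δ 1 :=
          (ENNReal.ofReal_lt_ofReal_iff hδ'pos).1 hGn
        have hd1lt : d1 (φ (s n) x) (φ0 x) < δ := by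
          rcases le_or_gt 1 (d1 (φ (s n) x) (φ0 x)) with h | h
          · exfalso
            rw [min_eq_left h] at h1
            exact absurd h1 (not_lt.2 (min_le_right δ 1))
          · rw [min_eq_right h.le] at h1
            exact lt_of_lt_of_le h1 (min_le_left δ 1)
        have hd2 : d2 (φ0 x) (φ (s n) x) < ε := by
          refine hδ _ ?_
          rw [← h1symm]
          exact hd1lt
        simp only [hHdef, indicator_of_mem hxE]
        rw [abs_of_nonneg (le_min zero_le_one (h2nonneg _ _))]
        calc min 1 (d2 (φ (s n) x) (φ0 x)) ≤ d2 (φ (s n) x) (φ0 x) := min_le_right _ _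
          _ = d2 (φ0 x) (φ (s n) x) := h2symm _ _
          _ < ε := hd2
      · simp only [hHdef, indicator_of_notMem hxE]
        simpa using hε
    have hHmeas : ∀ j, AEStronglyMeasurable (H j) μ := fun j =>
      ((measurable_const.min (hm2 _ (hms3 j))).indicator (hEm j)).aestronglyMeasurable
    have hbound_int : Integrable (S.indicator fun _ => (1:ℝ)) μ :=
      (integrable_indicator_iff hS).2 (integrableOn_const hSfin.ne)
    have hbd : ∀ j, ∀ᵐ x ∂μ, ‖H j x‖ ≤ S.indicator (fun _ => (1:ℝ)) x := by
      intro j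
      filter_upwards with x
      by_cases hxE : x ∈ E (s j)
      · simp only [hHdef, indicator_of_mem hxE, indicator_of_mem (hESub _ hxE)]
        rw [Real.norm_eq_abs, abs_of_nonneg (le_min zero_le_one (h2nonneg _ _))]
        exact min_le_left _ _
      · simp only [hHdef, indicator_of_notMem hxE]
        simp only [norm_zero]
        exact indicator_nonneg (fun _ _ => zero_le_one) x
    have hDCT : Tendsto (fun j => ∫ x, H j x ∂μ) atTop (nhds 0) := by
      have := tendsto_integral_of_dominated_convergence (F := H)
        (f := fun _ => (0:ℝ)) (bound := S.indicator fun _ => (1:ℝ))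
        hHmeas hbound_int hbd hHconv
      simpa using this
    have hHI2 : ∀ j, ∫ x, H j x ∂μ = I2 (s j) := fun j => by
      simp only [hHdef]
      rw [integral_indicator (hEm j)]
    refine hDCT.congr fun j => ?_
    exact hHI2 j
  have : Tendsto (fun t => I2 t + J t) L (nhds 0) := by
    simpa using hI2tendsto.add hJtendsto
  exact this.congr fun t => (hD2 t).symm
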